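/- arXiv:2112.13656 — 2 statements merged into one kernel-verified Lean document; each statement's English description precedes it below -/
import Mathlib

section
/- Let f be a symmetric norm on ℝ^n and let ‖·‖_f be the induced unitarily invariant norm on B(H). Then there exists a nonempty compact set S ⊆ ℝ^n such that every c = (c_1, …, c_n) ∈ S satisfies c_1 ≥ c_2 ≥ … ≥ c_n ≥ 0, and for every A ∈ B(H) one has ‖A‖_f = max_{c ∈ S} Σ_{j=1}^n c_j s_j(A), the maximum being attained. -/
open scoped InnerProductSpace

variable {H : Type*} [NormedAddCommGroup H] [InnerProductSpace ℂ H] [CompleteSpace H]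

/-- The `k`-th singular value (1-indexed) of a bounded operator `A`:
`s_k(A) = inf {‖A - X‖ : rank X < k}`. -/
noncomputable def sval (k : ℕ) (A : H →L[ℂ] H) : ℝ :=
  sInf { r : ℝ | ∃ X : H →L[ℂ] H,
    Module.rank ℂ (LinearMap.range (X : H →ₗ[ℂ] H)) < (k : Cardinal) ∧ r = ‖A - X‖ }

/-- `f : ℝ^n → ℝ` is a symmetric norm: a norm invariant under permutations of the
coordinates and under sign changes of the coordinates. -/
structure IsSymmetricNorm (n : ℕ) (f : (Fin n → ℝ) → ℝ) : Prop where
  triangle : ∀ x y, f (x + y) ≤ f x + f y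
  homog : ∀ (t : ℝ) (x), f (t • x) = |t| * f x
  definite : ∀ x, x ≠ 0 → 0 < f x
  perm_invariant : ∀ (σ : Equiv.Perm (Fin n)) (x), f (fun i => x (σ i)) = f x
  sign_invariant : ∀ (ε : Fin n → ℝ), (∀ i, ε i = 1 ∨ ε i = -1) →
    ∀ x, f (fun i => ε i * x i) = f x

/-- The unitarily invariant norm induced by a symmetric norm `f` on `ℝ^n`:
`‖A‖_f = f (s_1(A), …, s_n(A))`. -/
noncomputable def normf (n : ℕ) (f : (Fin n → ℝ) → ℝ) (A : H →L[ℂ] H) : ℝ :=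
  f (fun j : Fin n => sval (j.1 + 1) A)

lemma symnorm_zero {n : ℕ} {f : (Fin n → ℝ) → ℝ} (hf : IsSymmetricNorm n f) : f 0 = 0 := by
  have h := hf.homog 0 0
  simpa using h

lemma symnorm_nonneg {n : ℕ} {f : (Fin n → ℝ) → ℝ} (hf : IsSymmetricNorm n f) (x : Fin n → ℝ) :
    0 ≤ f x := by
  rcases eq_or_ne x 0 with h | h
  · rw [h, symnorm_zero hf]
  · exact (hf.definite x h).le

lemma sval_set_nonempty {k : ℕ} (hk : 0 < k) (A : H →L[ℂ] H) :
    Set.Nonempty { r : ℝ | ∃ X : H →L[ℂ] H,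
      Module.rank ℂ (LinearMap.range (X : H →ₗ[ℂ] H)) < (k : Cardinal) ∧ r = ‖A - X‖ } := by
  refine ⟨‖A - 0‖, 0, ?_, rfl⟩
  have h0 : Module.rank ℂ (LinearMap.range ((0 : H →L[ℂ] H) : H →ₗ[ℂ] H)) = 0 := by
    rw [show ((0 : H →L[ℂ] H) : H →ₗ[ℂ] H) = 0 from rfl, LinearMap.range_zero]
    exact rank_bot ℂ H
  rw [h0]
  exact_mod_cast hk

lemma sval_set_bddBelow (k : ℕ) (A : H →L[ℂ] H) :
    BddBelow { r : ℝ | ∃ X : H →L[ℂ] H,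
      Module.rank ℂ (LinearMap.range (X : H →ₗ[ℂ] H)) < (k : Cardinal) ∧ r = ‖A - X‖ } := by
  refine ⟨0, ?_⟩
  rintro r ⟨X, -, rfl⟩
  positivity

lemma sval_nonneg {k : ℕ} (hk : 0 < k) (A : H →L[ℂ] H) : 0 ≤ sval k A := by
  apply le_csInf (sval_set_nonempty hk A)
  rintro r ⟨X, -, rfl⟩
  positivity

lemma sval_anti {k l : ℕ} (hk : 0 < k) (hkl : k ≤ l) (A : H →L[ℂ] H) :
    sval l A ≤ sval k A := by
  apply csInf_le_csInf (sval_set_bddBelow l A) (sval_set_nonempty hk A)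
  rintro r ⟨X, hX, rfl⟩
  exact ⟨X, hX.trans_le (by exact_mod_cast hkl), rfl⟩

/-- Key duality lemma: for a symmetric norm `f` and a nonincreasing nonnegative vector `x`,
there is a nonincreasing nonnegative vector `d` with `∑ d j * y j ≤ f y` for all
nonincreasing nonnegative `y`, and `f x = ∑ d j * x j`. -/
lemma symnorm_dual {n : ℕ} {f : (Fin n → ℝ) → ℝ} (hf : IsSymmetricNorm n f)
    (x : Fin n → ℝ) (hxd : ∀ i j : Fin n, i ≤ j → x j ≤ x i) (hx0 : ∀ i, 0 ≤ x i) :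
    ∃ d : Fin n → ℝ, (∀ i j : Fin n, i ≤ j → d j ≤ d i) ∧ (∀ i, 0 ≤ d i) ∧
      (∀ y : Fin n → ℝ, (∀ i j : Fin n, i ≤ j → y j ≤ y i) → (∀ i, 0 ≤ y i) →
        ∑ j, d j * y j ≤ f y) ∧
      f x = ∑ j, d j * x j := by
  rcases eq_or_ne x 0 with hx | hx
  · refine ⟨0, fun i j _ => le_rfl, fun i => le_rfl, fun y _ _ => ?_, ?_⟩
    · simpa using symnorm_nonneg hf y
    · simp [hx, symnorm_zero hf]
  -- Hahn–Banach: a linear functional `g` with `g x = f x` and `g ≤ f`.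
  obtain ⟨g, hgx, hg⟩ : ∃ g : (Fin n → ℝ) →ₗ[ℝ] ℝ, g x = f x ∧ ∀ y, g y ≤ f y := by
    have hb : ∀ v : (LinearPMap.mkSpanSingleton (K := ℝ) (L := ℝ) (σ := RingHom.id ℝ) x (f x) hx).domain,
        (LinearPMap.mkSpanSingleton (K := ℝ) (L := ℝ) (σ := RingHom.id ℝ) x (f x) hx) v ≤ f v := by
      rintro ⟨v, hv⟩
      obtain ⟨c, rfl⟩ := Submodule.mem_span_singleton.1 hv
      rw [LinearPMap.mkSpanSingleton'_apply, hf.homog, smul_eq_mul]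
      exact mul_le_mul_of_nonneg_right (le_abs_self c) (symnorm_nonneg hf x)
    obtain ⟨g, hgeq, hgle⟩ := exists_extension_of_le_sublinear
      (LinearPMap.mkSpanSingleton (K := ℝ) (L := ℝ) (σ := RingHom.id ℝ) x (f x) hx) f
      (fun c hc y => by rw [hf.homog, abs_of_pos hc])
      hf.triangle hb
    refine ⟨g, ?_, hgle⟩
    exact (hgeq ⟨x, Submodule.mem_span_singleton_self x⟩).trans
      (LinearPMap.mkSpanSingleton_apply ℝ ℝ hx (f x))
  set cc : Fin n → ℝ := fun i => g (fun j => if i = j then 1 else 0) with hcc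
  have hgy : ∀ y : Fin n → ℝ, g y = ∑ i, y i * cc i := fun y => by
    simpa [smul_eq_mul] using LinearMap.pi_apply_eq_sum_univ g y
  set a : Fin n → ℝ := fun i => |cc i| with ha
  set π : Equiv.Perm (Fin n) := Fin.revPerm.trans (Tuple.sort a) with hπ
  set d : Fin n → ℝ := fun j => a (π j) with hd
  set ε : Fin n → ℝ := fun i => if 0 ≤ cc i then (1 : ℝ) else -1 with hε
  have hεpm : ∀ i, ε i = 1 ∨ ε i = -1 := by
    intro i; by_cases h : 0 ≤ cc i <;> simp [hε, h]
  have hεc : ∀ i, a i = ε i * cc i := by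
    intro i
    by_cases h : 0 ≤ cc i
    · simp [ha, hε, h, abs_of_nonneg h]
    · simp [ha, hε, h, abs_of_neg (lt_of_not_ge h)]
  have hd_anti : ∀ i j : Fin n, i ≤ j → d j ≤ d i := by
    intro i j hij
    have := Tuple.monotone_sort a (Fin.rev_le_rev.2 hij)
    simpa [hd, hπ, Function.comp] using this
  have hd0 : ∀ i, 0 ≤ d i := fun i => abs_nonneg _
  -- the sum against any vector y equals g applied to a symmetrized vector
  have hsum : ∀ y : Fin n → ℝ,
      ∑ j, d j * y j = g (fun i => ε i * y (π.symm i)) := by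
    intro y
    rw [hgy]
    rw [← Equiv.sum_comp π (fun i => (ε i * y (π.symm i)) * cc i)]
    apply Finset.sum_congr rfl
    intro j _
    rw [Equiv.symm_apply_apply]
    rw [show d j = ε (π j) * cc (π j) from hεc (π j)]
    ring
  have hbound : ∀ y : Fin n → ℝ, (∀ i j : Fin n, i ≤ j → y j ≤ y i) → (∀ i, 0 ≤ y i) →
      ∑ j, d j * y j ≤ f y := by
    intro y _ _
    rw [hsum y]
    calc g (fun i => ε i * y (π.symm i)) ≤ f (fun i => ε i * y (π.symm i)) := hg _
      _ = f (fun i => y (π.symm i)) := hf.sign_invariant ε hεpm _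
      _ = f y := hf.perm_invariant π.symm y
  refine ⟨d, hd_anti, hd0, hbound, le_antisymm ?_ (hbound x hxd hx0)⟩
  -- f x ≤ ∑ d j * x j
  have hmono : Monovary d x := by
    intro i j hij
    have hji : j ≤ i := by
      by_contra hc
      exact absurd hij (not_lt.2 (hxd i j (le_of_not_ge hc)))
    exact hd_anti j i hji
  calc f x = g x := hgx.symm
    _ = ∑ i, x i * cc i := hgy x
    _ ≤ ∑ i, x i * a i := by
        apply Finset.sum_le_sum
        intro i _
        exact mul_le_mul_of_nonneg_left (le_abs_self _) (hx0 i)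
    _ = ∑ j, x (π j) * a (π j) := (Equiv.sum_comp π (fun i => x i * a i)).symm
    _ = ∑ j, d j * x (π j) := by
        apply Finset.sum_congr rfl; intro j _; rw [hd]; ring
    _ ≤ ∑ j, d j * x j := by
        simpa [smul_eq_mul] using hmono.sum_smul_comp_perm_le_sum_smul (σ := π)

theorem stmt0 (n : ℕ) (hn : 0 < n) (hdim : (n : Cardinal) ≤ Module.rank ℂ H)
    (f : (Fin n → ℝ) → ℝ) (hf : IsSymmetricNorm n f) :
    ∃ S : Set (Fin n → ℝ), IsCompact S ∧ S.Nonempty ∧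
      (∀ c ∈ S, (∀ i j : Fin n, i ≤ j → c j ≤ c i) ∧ ∀ i, 0 ≤ c i) ∧
      ∀ A : H →L[ℂ] H,
        (∀ c ∈ S, ∑ j : Fin n, c j * sval (j.1 + 1) A ≤ normf n f A) ∧
        ∃ c ∈ S, normf n f A = ∑ j : Fin n, c j * sval (j.1 + 1) A := by
  set S : Set (Fin n → ℝ) := {c | (∀ i j : Fin n, i ≤ j → c j ≤ c i) ∧ (∀ i, 0 ≤ c i) ∧
    ∀ y : Fin n → ℝ, (∀ i j : Fin n, i ≤ j → y j ≤ y i) → (∀ i, 0 ≤ y i) →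
      ∑ j, c j * y j ≤ f y} with hS
  have hclosed : IsClosed S := by
    have h1 : IsClosed {c : Fin n → ℝ | ∀ i j : Fin n, i ≤ j → c j ≤ c i} := by
      have he : {c : Fin n → ℝ | ∀ i j : Fin n, i ≤ j → c j ≤ c i} =
          ⋂ (i : Fin n) (j : Fin n) (_ : i ≤ j), {c : Fin n → ℝ | c j ≤ c i} := by
        ext c; simp [Set.mem_iInter]
      rw [he]
      exact isClosed_iInter fun i => isClosed_iInter fun j => isClosed_iInter fun _ =>
        isClosed_le (continuous_apply j) (continuous_apply i)
    have h2 : IsClosed {c : Fin n → ℝ | ∀ i, 0 ≤ c i} := by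
      have he : {c : Fin n → ℝ | ∀ i, 0 ≤ c i} = ⋂ (i : Fin n), {c : Fin n → ℝ | 0 ≤ c i} := by
        ext c; simp [Set.mem_iInter]
      rw [he]
      exact isClosed_iInter fun i => isClosed_le continuous_const (continuous_apply i)
    have h3 : IsClosed {c : Fin n → ℝ | ∀ y : Fin n → ℝ, (∀ i j : Fin n, i ≤ j → y j ≤ y i) →
        (∀ i, 0 ≤ y i) → ∑ j, c j * y j ≤ f y} := by
      have he : {c : Fin n → ℝ | ∀ y : Fin n → ℝ, (∀ i j : Fin n, i ≤ j → y j ≤ y i) →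
          (∀ i, 0 ≤ y i) → ∑ j, c j * y j ≤ f y} =
          ⋂ (y : Fin n → ℝ) (_ : ∀ i j : Fin n, i ≤ j → y j ≤ y i) (_ : ∀ i, 0 ≤ y i),
            {c : Fin n → ℝ | ∑ j, c j * y j ≤ f y} := by
        ext c; simp [Set.mem_iInter]
      rw [he]
      refine isClosed_iInter fun y => isClosed_iInter fun _ => isClosed_iInter fun _ => ?_
      exact isClosed_le (by continuity) continuous_const
    exact h1.inter (h2.inter h3)
  have hsub : S ⊆ Set.pi Set.univ (fun _ : Fin n => Set.Icc (0 : ℝ) (f (fun _ => 1))) := by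
    rintro c ⟨hcd, hc0, hcb⟩ i -
    refine ⟨hc0 i, ?_⟩
    have h1 := hcb (fun _ => 1) (fun _ _ _ => le_rfl) (fun _ => zero_le_one)
    simp only [mul_one] at h1
    calc c i ≤ ∑ j, c j := Finset.single_le_sum (fun j _ => hc0 j) (Finset.mem_univ i)
      _ ≤ _ := h1
  have hcompact : IsCompact S :=
    (isCompact_univ_pi fun _ => isCompact_Icc).of_isClosed_subset hclosed hsub
  have h0mem : (0 : Fin n → ℝ) ∈ S := by
    refine ⟨fun i j _ => le_rfl, fun i => le_rfl, fun y _ _ => ?_⟩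
    simpa using symnorm_nonneg hf y
  refine ⟨S, hcompact, ⟨0, h0mem⟩, fun c hc => ⟨hc.1, hc.2.1⟩, fun A => ?_⟩
  set x : Fin n → ℝ := fun j : Fin n => sval (j.1 + 1) A with hx
  have hxd : ∀ i j : Fin n, i ≤ j → x j ≤ x i := fun i j hij =>
    sval_anti (Nat.succ_pos _) (Nat.succ_le_succ hij) A
  have hx0 : ∀ i, 0 ≤ x i := fun i => sval_nonneg (Nat.succ_pos _) A
  have hnf : normf n f A = f x := rfl
  constructor
  · intro c hc
    rw [hnf]
    exact hc.2.2 x hxd hx0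
  · obtain ⟨d, hdd, hd0, hdb, hdx⟩ := symnorm_dual hf x hxd hx0
    exact ⟨d, ⟨hdd, hd0, hdb⟩, by rw [hnf]; exact hdx⟩
end

section
/- Let f be a symmetric norm on ℝ^n with f(e_1) = 1, and let ‖·‖_f be the induced unitarily invariant norm on B(H). Assume furthermore that every T ∈ B(H) with ‖T‖_f = s_1(T) has rank at most one. Then two nonzero operators A, B ∈ B(H) satisfy ‖AB‖_f = ‖A‖_f · ‖B‖_f if and only if there exist nonzero vectors x, z ∈ H and a unit vector y ∈ H such that A = x y* and B = y z*. -/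
open scoped InnerProductSpace

variable {H : Type*} [NormedAddCommGroup H] [InnerProductSpace ℂ H] [CompleteSpace H]

/-- The rank-one operator `x y* : z ↦ ⟨z, y⟩ x` (inner product linear in `z`). -/
noncomputable def rankOne (x y : H) : H →L[ℂ] H :=
  (innerSL ℂ y).smulRight x

set_option linter.unusedSectionVars false
set_option linter.unusedVariables false

namespace Aux

/-- The defining set for `sval`. -/
def svalSet (k : ℕ) (A : H →L[ℂ] H) : Set ℝ :=
  { r : ℝ | ∃ X : H →L[ℂ] H,
    Module.rank ℂ (LinearMap.range (X : H →ₗ[ℂ] H)) < (k : Cardinal) ∧ r = ‖A - X‖ }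

lemma sval_eq (k : ℕ) (A : H →L[ℂ] H) : sval k A = sInf (svalSet k A) := rfl

lemma svalSet_bddBelow (k : ℕ) (A : H →L[ℂ] H) : BddBelow (svalSet k A) := by
  refine ⟨0, ?_⟩
  rintro r ⟨X, -, rfl⟩
  exact norm_nonneg _

lemma svalSet_nonempty {k : ℕ} (hk : 0 < k) (A : H →L[ℂ] H) : (svalSet k A).Nonempty := by
  refine ⟨‖A‖, 0, ?_, by simp⟩
  have : ((0 : H →L[ℂ] H) : H →ₗ[ℂ] H) = 0 := rfl
  rw [this, LinearMap.range_zero, rank_bot]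
  exact_mod_cast hk

lemma sval_nonneg (k : ℕ) (A : H →L[ℂ] H) : 0 ≤ sval k A :=
  Real.sInf_nonneg (by rintro r ⟨X, -, rfl⟩; exact norm_nonneg _)

lemma sval_le (k : ℕ) (A X : H →L[ℂ] H)
    (h : Module.rank ℂ (LinearMap.range (X : H →ₗ[ℂ] H)) < (k : Cardinal)) :
    sval k A ≤ ‖A - X‖ :=
  csInf_le (svalSet_bddBelow k A) ⟨X, h, rfl⟩

lemma sval_one (A : H →L[ℂ] H) : sval 1 A = ‖A‖ := by
  have hset : svalSet 1 A = {‖A‖} := by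
    ext r
    constructor
    · rintro ⟨X, hX, rfl⟩
      rw [Nat.cast_one, Cardinal.lt_one_iff_zero, rank_zero_iff_forall_zero] at hX
      have hX0 : X = 0 := by
        ext z
        have := hX ⟨X z, LinearMap.mem_range_self _ z⟩
        simpa [Subtype.ext_iff] using this
      simp [hX0]
    · rintro rfl
      refine ⟨0, ?_, by simp⟩
      have : ((0 : H →L[ℂ] H) : H →ₗ[ℂ] H) = 0 := rfl
      rw [this, LinearMap.range_zero, rank_bot]
      simp
  rw [sval_eq, hset, csInf_singleton]

lemma sval_eq_zero_of_rank_lt {k : ℕ} (A : H →L[ℂ] H)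
    (h : Module.rank ℂ (LinearMap.range (A : H →ₗ[ℂ] H)) < (k : Cardinal)) :
    sval k A = 0 :=
  le_antisymm (by simpa using sval_le k A A h) (sval_nonneg k A)

lemma le_mul_csInf {c a : ℝ} {S : Set ℝ} (hc : 0 ≤ c) (hS : S.Nonempty)
    (hS0 : ∀ r ∈ S, 0 ≤ r) (h : ∀ r ∈ S, a ≤ c * r) : a ≤ c * sInf S := by
  rcases eq_or_lt_of_le hc with hc0 | hcpos
  · obtain ⟨r, hr⟩ := hS
    have := h r hr
    rw [← hc0] at this ⊢
    simpa using this
  · have : a / c ≤ sInf S := le_csInf hS fun r hr => by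
      rw [div_le_iff₀ hcpos, mul_comm]; exact h r hr
    calc a = c * (a / c) := by field_simp
    _ ≤ c * sInf S := by exact mul_le_mul_of_nonneg_left this hc

lemma sval_comp_le_right {k : ℕ} (hk : 0 < k) (A B : H →L[ℂ] H) :
    sval k (A ∘L B) ≤ ‖A‖ * sval k B := by
  rw [sval_eq k B]
  refine le_mul_csInf (norm_nonneg A) (svalSet_nonempty hk B)
    (by rintro r ⟨X, -, rfl⟩; exact norm_nonneg _) ?_
  rintro r ⟨X, hX, rfl⟩
  have hrank : Module.rank ℂ (LinearMap.range ((A ∘L X : H →L[ℂ] H) : H →ₗ[ℂ] H))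
      < (k : Cardinal) := by
    have : ((A ∘L X : H →L[ℂ] H) : H →ₗ[ℂ] H) = (A : H →ₗ[ℂ] H).comp (X : H →ₗ[ℂ] H) := rfl
    rw [this]
    exact lt_of_le_of_lt (LinearMap.rank_comp_le_right _ _) hX
  calc sval k (A ∘L B) ≤ ‖A ∘L B - A ∘L X‖ := sval_le k _ _ hrank
  _ = ‖A ∘L (B - X)‖ := by rw [ContinuousLinearMap.comp_sub]
  _ ≤ ‖A‖ * ‖B - X‖ := ContinuousLinearMap.opNorm_comp_le _ _

lemma sval_comp_le_left {k : ℕ} (hk : 0 < k) (A B : H →L[ℂ] H) :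
    sval k (A ∘L B) ≤ ‖B‖ * sval k A := by
  rw [sval_eq k A]
  refine le_mul_csInf (norm_nonneg B) (svalSet_nonempty hk A)
    (by rintro r ⟨X, -, rfl⟩; exact norm_nonneg _) ?_
  rintro r ⟨X, hX, rfl⟩
  have hrank : Module.rank ℂ (LinearMap.range ((X ∘L B : H →L[ℂ] H) : H →ₗ[ℂ] H))
      < (k : Cardinal) := by
    have : ((X ∘L B : H →L[ℂ] H) : H →ₗ[ℂ] H) = (X : H →ₗ[ℂ] H).comp (B : H →ₗ[ℂ] H) := rfl
    rw [this]
    exact lt_of_le_of_lt (LinearMap.rank_comp_le_left _ _) hX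
  calc sval k (A ∘L B) ≤ ‖A ∘L B - X ∘L B‖ := sval_le k _ _ hrank
  _ = ‖(A - X) ∘L B‖ := by rw [ContinuousLinearMap.sub_comp]
  _ ≤ ‖A - X‖ * ‖B‖ := ContinuousLinearMap.opNorm_comp_le _ _
  _ = ‖B‖ * ‖A - X‖ := mul_comm _ _

section SymNorm

variable {n : ℕ} {f : (Fin n → ℝ) → ℝ}

lemma f_nonneg (hf : IsSymmetricNorm n f) (x : Fin n → ℝ) : 0 ≤ f x := by
  have h0 : f 0 = 0 := by
    have := hf.homog 0 0
    simpa using this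
  have hneg : f (-x) = f x := by
    have := hf.homog (-1) x
    simpa using this
  have := hf.triangle x (-x)
  simp only [add_neg_cancel, h0, hneg] at this
  linarith

/-- Single coordinate monotonicity step for an absolute norm. -/
lemma f_update_le (hf : IsSymmetricNorm n f) (z : Fin n → ℝ) (i : Fin n) (t : ℝ)
    (h0 : 0 ≤ t) (ht : t ≤ z i) : f (Function.update z i t) ≤ f z := by
  by_cases hz : z i = 0
  · have : t = 0 := le_antisymm (hz ▸ ht) h0
    rw [this, ← hz, Function.update_eq_self]
  · have hzpos : 0 < z i := lt_of_le_of_ne (le_trans h0 ht) (Ne.symm hz)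
    set a : ℝ := (z i + t) / (2 * z i) with ha
    set b : ℝ := (z i - t) / (2 * z i) with hb
    have hab : a + b = 1 := by
      rw [ha, hb, ← add_div, div_eq_one_iff_eq (by positivity)]; ring
    have haa : 0 ≤ a := by positivity
    have hbb : 0 ≤ b := by
      apply div_nonneg _ (by positivity)
      linarith
    set w : Fin n → ℝ := Function.update z i (-(z i)) with hw
    have hfw : f w = f z := by
      have := hf.sign_invariant (fun j => if j = i then -1 else 1)
        (fun j => by by_cases h : j = i <;> simp [h]) z
      rw [← this]
      congr 1
      funext j
      by_cases h : j = i <;> simp [hw, Function.update, h]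
    have hdecomp : Function.update z i t = a • z + b • w := by
      funext j
      by_cases h : j = i
      · subst h
        simp only [Function.update_self, Pi.add_apply, Pi.smul_apply, smul_eq_mul, hw,
          Function.update_self]
        rw [ha, hb, div_mul_eq_mul_div, div_mul_eq_mul_div, ← add_div, eq_div_iff (by positivity)]
        ring
      · simp only [Function.update_of_ne h, Pi.add_apply, Pi.smul_apply, smul_eq_mul, hw,
          Function.update_of_ne h]
        rw [← add_mul, hab, one_mul]
    calc f (Function.update z i t) = f (a • z + b • w) := by rw [hdecomp]
    _ ≤ f (a • z) + f (b • w) := hf.triangle _ _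
    _ = a * f z + b * f w := by rw [hf.homog, hf.homog, abs_of_nonneg haa, abs_of_nonneg hbb]
    _ = (a + b) * f z := by rw [hfw]; ring
    _ = f z := by rw [hab, one_mul]

/-- Monotonicity of an absolute norm on nonnegative vectors. -/
lemma f_mono (hf : IsSymmetricNorm n f) {x y : Fin n → ℝ}
    (hx : ∀ i, 0 ≤ x i) (hxy : ∀ i, x i ≤ y i) : f x ≤ f y := by
  have key : ∀ s : Finset (Fin n), f (fun i => if i ∈ s then x i else y i) ≤ f y := by
    intro s
    induction s using Finset.induction_on with
    | empty => simp
    | @insert a s ha ih =>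
      have heq : (fun i => if i ∈ insert a s then x i else y i) =
          Function.update (fun i => if i ∈ s then x i else y i) a (x a) := by
        funext j
        by_cases h : j = a
        · subst h; simp [ha]
        · simp [Function.update_of_ne h, h, Finset.mem_insert]
      rw [heq]
      refine le_trans (f_update_le hf _ a (x a) (hx a) ?_) ih
      simp only [ha, if_neg ha]
      exact hxy a
  have := key Finset.univ
  simpa using this

end SymNorm


section NormF

variable {n : ℕ} {f : (Fin n → ℝ) → ℝ}

lemma norm_le_normf (hn : 0 < n) (hf : IsSymmetricNorm n f)
    (hcross : f (Pi.single (⟨0, hn⟩ : Fin n) 1 : Fin n → ℝ) = 1) (A : H →L[ℂ] H) :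
    ‖A‖ ≤ normf n f A := by
  set i0 : Fin n := ⟨0, hn⟩
  have hx : f (‖A‖ • (Pi.single i0 1 : Fin n → ℝ)) = ‖A‖ := by
    rw [hf.homog, abs_of_nonneg (norm_nonneg A), hcross, mul_one]
  rw [← hx]
  refine f_mono hf (fun i => ?_) (fun i => ?_)
  · by_cases h : i = i0 <;> simp [h, Pi.single_eq_of_ne, norm_nonneg]
  · by_cases h : i = i0
    · subst h
      simp only [Pi.smul_apply, Pi.single_eq_same, smul_eq_mul, mul_one]
      rw [show (0:ℕ) + 1 = 1 from rfl, sval_one]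
    · simp only [Pi.smul_apply, Pi.single_eq_of_ne h, smul_eq_mul, mul_zero]
      exact sval_nonneg _ _

lemma normf_comp_le_right (hf : IsSymmetricNorm n f) (A B : H →L[ℂ] H) :
    normf n f (A ∘L B) ≤ ‖A‖ * normf n f B := by
  have h1 : normf n f (A ∘L B) ≤ f (‖A‖ • fun j : Fin n => sval (j.1 + 1) B) := by
    refine f_mono hf (fun j => sval_nonneg _ _) (fun j => ?_)
    simpa using sval_comp_le_right (Nat.succ_pos _) A B
  rwa [hf.homog, abs_of_nonneg (norm_nonneg A)] at h1

lemma normf_comp_le_left (hf : IsSymmetricNorm n f) (A B : H →L[ℂ] H) :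
    normf n f (A ∘L B) ≤ ‖B‖ * normf n f A := by
  have h1 : normf n f (A ∘L B) ≤ f (‖B‖ • fun j : Fin n => sval (j.1 + 1) A) := by
    refine f_mono hf (fun j => sval_nonneg _ _) (fun j => ?_)
    simpa using sval_comp_le_left (Nat.succ_pos _) A B
  rwa [hf.homog, abs_of_nonneg (norm_nonneg B)] at h1

lemma normf_of_rank_le_one (hn : 0 < n) (hf : IsSymmetricNorm n f)
    (hcross : f (Pi.single (⟨0, hn⟩ : Fin n) 1 : Fin n → ℝ) = 1) (T : H →L[ℂ] H)
    (hT : Module.rank ℂ (LinearMap.range (T : H →ₗ[ℂ] H)) ≤ 1) :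
    normf n f T = ‖T‖ := by
  set i0 : Fin n := ⟨0, hn⟩
  have hvec : (fun j : Fin n => sval (j.1 + 1) T) = ‖T‖ • (Pi.single i0 1 : Fin n → ℝ) := by
    funext j
    by_cases h : j = i0
    · subst h
      have : (i0 : Fin n).1 + 1 = 1 := rfl
      rw [this, sval_one]
      simp
    · have hj : 1 ≤ j.1 := by
        rcases Nat.eq_zero_or_pos j.1 with h0 | h1
        · exact absurd (Fin.ext h0) h
        · exact h1
      have hlt : Module.rank ℂ (LinearMap.range (T : H →ₗ[ℂ] H)) < ((j.1 + 1 : ℕ) : Cardinal) :=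
        lt_of_le_of_lt hT (by exact_mod_cast Nat.lt_succ_of_le hj)
      rw [sval_eq_zero_of_rank_lt T hlt]
      simp [Pi.single_eq_of_ne h]
  unfold normf
  rw [hvec, hf.homog, abs_of_nonneg (norm_nonneg T), hcross, mul_one]

end NormF

section RankOne

lemma rankOne_apply (x y z : H) : rankOne x y z = ⟪y, z⟫_ℂ • x := rfl

lemma norm_rankOne (x y : H) : ‖rankOne x y‖ = ‖y‖ * ‖x‖ := by
  rw [rankOne, ContinuousLinearMap.norm_smulRight_apply, innerSL_apply_norm]

lemma rankOne_eq_zero_iff {x y : H} : rankOne x y = 0 ↔ x = 0 ∨ y = 0 := by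
  constructor
  · intro h
    have := congrArg norm h
    rw [norm_rankOne, norm_zero] at this
    rcases mul_eq_zero.1 this with h | h
    · right; exact norm_eq_zero.1 h
    · left; exact norm_eq_zero.1 h
  · rintro (rfl | rfl) <;> ext z <;> simp [rankOne_apply]

lemma rank_rankOne_le (x y : H) :
    Module.rank ℂ (LinearMap.range ((rankOne x y : H →L[ℂ] H) : H →ₗ[ℂ] H)) ≤ 1 := by
  have hle : LinearMap.range ((rankOne x y : H →L[ℂ] H) : H →ₗ[ℂ] H) ≤
      Submodule.span ℂ {x} := by
    rintro v ⟨z, rfl⟩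
    exact Submodule.smul_mem _ _ (Submodule.mem_span_singleton_self x)
  calc Module.rank ℂ (LinearMap.range ((rankOne x y : H →L[ℂ] H) : H →ₗ[ℂ] H))
      ≤ Module.rank ℂ (Submodule.span ℂ {x}) := Submodule.rank_mono hle
  _ ≤ Cardinal.mk ({x} : Set H) := rank_span_le _
  _ = 1 := Cardinal.mk_singleton _

lemma rankOne_comp (x u v z : H) :
    rankOne x u ∘L rankOne v z = rankOne ((⟪u, v⟫_ℂ) • x) z := by
  ext w
  simp only [ContinuousLinearMap.comp_apply, rankOne_apply, inner_smul_right, smul_smul,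
    mul_comm]

lemma exists_rankOne (A : H →L[ℂ] H) (hA : A ≠ 0)
    (h1 : Module.rank ℂ (LinearMap.range (A : H →ₗ[ℂ] H)) ≤ 1) :
    ∃ x y : H, x ≠ 0 ∧ y ≠ 0 ∧ A = rankOne x y := by
  obtain ⟨v₀, hv₀⟩ := rank_le_one_iff.1 h1
  set x : H := (v₀ : H)
  have hAz : ∀ z : H, ∃ r : ℂ, A z = r • x := by
    intro z
    obtain ⟨r, hr⟩ := hv₀ ⟨A z, LinearMap.mem_range_self _ z⟩
    exact ⟨r, by simpa [Subtype.ext_iff, eq_comm] using hr⟩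
  have hx : x ≠ 0 := by
    intro hx0
    apply hA
    ext z
    obtain ⟨r, hr⟩ := hAz z
    simp [hr, hx0]
  set y : H := ((‖x‖ : ℂ) ^ 2)⁻¹ • (ContinuousLinearMap.adjoint A) x with hy
  have hAeq : A = rankOne x y := by
    ext z
    obtain ⟨r, hr⟩ := hAz z
    have hinner : ⟪x, A z⟫_ℂ = r * (‖x‖ : ℂ) ^ 2 := by
      rw [hr, inner_smul_right, inner_self_eq_norm_sq_to_K]
      norm_cast
    have hyz : ⟪y, z⟫_ℂ = r := by
      rw [hy, inner_smul_left, ContinuousLinearMap.adjoint_inner_left, hinner]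
      have hx2 : ((‖x‖ : ℂ) ^ 2) ≠ 0 := by
        simp [pow_eq_zero_iff, norm_eq_zero, hx]
      rw [map_inv₀, map_pow, Complex.conj_ofReal]
      field_simp
      exact mul_div_cancel_left₀ r (by exact_mod_cast norm_ne_zero_iff.2 hx)
    rw [rankOne_apply, hyz, hr]
  have hyne : y ≠ 0 := by
    intro hy0
    apply hA
    rw [hAeq, hy0]
    ext z
    simp [rankOne_apply]
  exact ⟨x, y, hx, hyne, hAeq⟩

lemma rankOne_smul_right (x y : H) (c : ℂ) :
    rankOne x (c • y) = rankOne ((starRingEnd ℂ c) • x) y := by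
  ext w
  simp only [rankOne_apply, inner_smul_left, smul_smul, mul_comm]

lemma rankOne_smul_left (x y : H) (c : ℂ) :
    rankOne (c • x) y = rankOne x ((starRingEnd ℂ c) • y) := by
  ext w
  simp only [rankOne_apply, inner_smul_left, smul_smul, RingHom.id_apply,
    starRingEnd_self_apply, mul_comm]

end RankOne

end Aux

theorem stmt10 (n : ℕ) (hn : 0 < n) (hdim : (n : Cardinal) ≤ Module.rank ℂ H)
    (f : (Fin n → ℝ) → ℝ) (hf : IsSymmetricNorm n f)
    (hcross : f (Pi.single (⟨0, hn⟩ : Fin n) 1 : Fin n → ℝ) = 1)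
    (hrank : ∀ T : H →L[ℂ] H, normf n f T = sval 1 T →
      Module.rank ℂ (LinearMap.range (T : H →ₗ[ℂ] H)) ≤ 1) :
    ∀ A B : H →L[ℂ] H, A ≠ 0 → B ≠ 0 →
      (normf n f (A ∘L B) = normf n f A * normf n f B ↔
        ∃ (x z : H), x ≠ 0 ∧ z ≠ 0 ∧ ∃ y : H, ‖y‖ = 1 ∧
          A = rankOne x y ∧ B = rankOne y z) := by
  intro A B hA hB
  have hnA : 0 < normf n f A :=
    lt_of_lt_of_le (norm_pos_iff.2 hA) (Aux.norm_le_normf hn hf hcross A)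
  have hnB : 0 < normf n f B :=
    lt_of_lt_of_le (norm_pos_iff.2 hB) (Aux.norm_le_normf hn hf hcross B)
  constructor
  · intro h
    -- both A and B have rank at most one
    have hA1 : normf n f A = sval 1 A := by
      rw [Aux.sval_one]
      refine le_antisymm ?_ (Aux.norm_le_normf hn hf hcross A)
      have h1 : normf n f A * normf n f B ≤ ‖A‖ * normf n f B := by
        rw [← h]; exact Aux.normf_comp_le_right hf A B
      exact le_of_mul_le_mul_right h1 hnB
    have hB1 : normf n f B = sval 1 B := by
      rw [Aux.sval_one]
      refine le_antisymm ?_ (Aux.norm_le_normf hn hf hcross B)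
      have h1 : normf n f B * normf n f A ≤ ‖B‖ * normf n f A := by
        rw [mul_comm, ← h]; exact Aux.normf_comp_le_left hf A B
      exact le_of_mul_le_mul_right h1 hnA
    obtain ⟨x, u, hx, hu, hAeq⟩ := Aux.exists_rankOne A hA (hrank A hA1)
    obtain ⟨v, z, hv, hz, hBeq⟩ := Aux.exists_rankOne B hB (hrank B hB1)
    -- compute the three norms
    have nfA : normf n f A = ‖u‖ * ‖x‖ := by
      rw [hAeq, Aux.normf_of_rank_le_one hn hf hcross _ (Aux.rank_rankOne_le x u),
        Aux.norm_rankOne]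
    have nfB : normf n f B = ‖z‖ * ‖v‖ := by
      rw [hBeq, Aux.normf_of_rank_le_one hn hf hcross _ (Aux.rank_rankOne_le v z),
        Aux.norm_rankOne]
    have hABeq : A ∘L B = rankOne ((⟪u, v⟫_ℂ) • x) z := by
      rw [hAeq, hBeq, Aux.rankOne_comp]
    have nfAB : normf n f (A ∘L B) = ‖z‖ * (‖⟪u, v⟫_ℂ‖ * ‖x‖) := by
      rw [hABeq, Aux.normf_of_rank_le_one hn hf hcross _ (Aux.rank_rankOne_le _ z),
        Aux.norm_rankOne, norm_smul]
    have hxpos : (0:ℝ) < ‖x‖ := norm_pos_iff.2 hx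
    have hzpos : (0:ℝ) < ‖z‖ := norm_pos_iff.2 hz
    have key : ‖⟪u, v⟫_ℂ‖ = ‖u‖ * ‖v‖ := by
      have h' : ‖z‖ * (‖⟪u, v⟫_ℂ‖ * ‖x‖) = (‖u‖ * ‖x‖) * (‖z‖ * ‖v‖) := by
        rw [← nfAB, ← nfA, ← nfB]; exact h
      have hne : ‖z‖ * ‖x‖ ≠ 0 := by positivity
      apply mul_right_cancel₀ hne
      linear_combination h'
    obtain ⟨r, hr, hvu⟩ := (norm_inner_eq_norm_iff hu hv).1 key
    -- normalize
    have hvnorm : (‖v‖ : ℝ) ≠ 0 := ne_of_gt (norm_pos_iff.2 hv)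
    set y : H := ((‖v‖ : ℂ))⁻¹ • v with hy
    have hyv : ((‖v‖ : ℂ)) • y = v := by
      rw [hy, smul_smul]
      rw [mul_inv_cancel₀ (by exact_mod_cast hvnorm), one_smul]
    have hynorm : ‖y‖ = 1 := by
      rw [hy, norm_smul, norm_inv, Complex.norm_real, norm_norm,
        inv_mul_cancel₀ hvnorm]
    set c : ℂ := r⁻¹ * (‖v‖ : ℂ) with hc
    have hu_eq : u = c • y := by
      have h2 : u = r⁻¹ • v := by
        rw [hvu, smul_smul, inv_mul_cancel₀ hr, one_smul]
      rw [hy, smul_smul, hc]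
      have h3 : r⁻¹ * (‖v‖ : ℂ) * ((‖v‖ : ℂ))⁻¹ = r⁻¹ := by
        rw [mul_assoc, mul_inv_cancel₀ (by exact_mod_cast hvnorm : ((‖v‖ : ℂ)) ≠ 0), mul_one]
      rw [h3]
      exact h2
    have hcne : c ≠ 0 := by
      apply mul_ne_zero (inv_ne_zero hr)
      exact_mod_cast hvnorm
    refine ⟨(starRingEnd ℂ c) • x, (starRingEnd ℂ ((‖v‖ : ℂ))) • z, ?_, ?_, y, hynorm, ?_, ?_⟩
    · exact smul_ne_zero (by simpa using hcne) hx
    · refine smul_ne_zero ?_ hz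
      simpa using hvnorm
    · rw [hAeq, hu_eq, Aux.rankOne_smul_right]
    · rw [hBeq]
      conv_lhs => rw [← hyv]
      rw [Aux.rankOne_smul_left]
  · rintro ⟨x, z, hx, hz, y, hy, hAeq, hBeq⟩
    have hABeq : A ∘L B = rankOne x z := by
      rw [hAeq, hBeq, Aux.rankOne_comp]
      have : ⟪y, y⟫_ℂ = 1 := by
        rw [inner_self_eq_norm_sq_to_K, hy]
        norm_num
      rw [this, one_smul]
    rw [hABeq, hAeq, hBeq,
      Aux.normf_of_rank_le_one hn hf hcross _ (Aux.rank_rankOne_le x z),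
      Aux.normf_of_rank_le_one hn hf hcross _ (Aux.rank_rankOne_le x y),
      Aux.normf_of_rank_le_one hn hf hcross _ (Aux.rank_rankOne_le y z),
      Aux.norm_rankOne, Aux.norm_rankOne, Aux.norm_rankOne, hy]
    ring
end
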